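/- For integers m, n ≥ 1, let P be a coarsening of the column set of (m+2)P_n with |P| = k ≥ 2, and let F be a symmetric subset of P². If P contains a set X with (X,X) ∉ F, then the (P,F)-flip of (m+2)P_n contains a (k−1)-flipped mP_n as a pivot-minor. -/

import Mathlib

open SimpleGraph

universe u v

/-! ### Basic graph operations: flips, local complementation, pivoting, pivot-minors -/

/-- Flip the adjacency of `G` exactly at the pairs of distinct vertices where the
(symmetrized) predicate `p` holds. -/
def sdFlip {V : Type u} (G : SimpleGraph V) (p : V → V → Prop) : SimpleGraph V where
  Adj x y := x ≠ y ∧ Xor' (G.Adj x y) (p x y ∨ p y x)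
  symm := by
    constructor
    intro x y h
    refine ⟨h.1.symm, ?_⟩
    have h2 := h.2
    rwa [G.adj_comm x y, or_comm] at h2
  loopless := by
    constructor
    intro x h
    exact h.1 rfl

/-- Local complementation `G * v`: complement the adjacency inside the neighborhood of `v`. -/
def localComp {V : Type u} (G : SimpleGraph V) (v : V) : SimpleGraph V :=
  sdFlip G (fun x y => G.Adj v x ∧ G.Adj v y)

/-- Pivoting an edge `uv`: `G ∧ uv = G * u * v * u`. -/
def pivot {V : Type u} (G : SimpleGraph V) (u v : V) : SimpleGraph V :=
  localComp (localComp (localComp G u) v) u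

/-- Applying a sequence of pivots. -/
def pivotSeq {V : Type u} (G : SimpleGraph V) : List (V × V) → SimpleGraph V
  | [] => G
  | e :: l => pivotSeq (pivot G e.1 e.2) l

/-- Each pivot in the sequence is performed on an edge of the current graph. -/
def ValidPivots {V : Type u} (G : SimpleGraph V) : List (V × V) → Prop
  | [] => True
  | e :: l => G.Adj e.1 e.2 ∧ ValidPivots (pivot G e.1 e.2) l

/-- `H` is a pivot-minor of `G`: `H` is isomorphic to a graph obtained from `G` by a sequence of
pivotings (on edges of the current graph) and vertex deletions. -/
def IsPivotMinorOf {W : Type v} {V : Type u} (H : SimpleGraph W) (G : SimpleGraph V) : Prop :=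
  ∃ (l : List (V × V)) (S : Set V), ValidPivots G l ∧
    Nonempty (H ≃g (pivotSeq G l).induce S)

/-! ### The half-graph join `G △ H` -/

/-- `G △ H`: the disjoint union of `G` and `H` together with the half graph joining them:
the `i`-th vertex of `G` is adjacent to the `j`-th vertex of `H` iff `i ≥ j`. -/
def halfJoin {n : ℕ} (G H : SimpleGraph (Fin n)) : SimpleGraph (Fin n ⊕ Fin n) where
  Adj x y :=
    match x, y with
    | Sum.inl i, Sum.inl i' => G.Adj i i'
    | Sum.inr j, Sum.inr j' => H.Adj j j'
    | Sum.inl i, Sum.inr j => j ≤ i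
    | Sum.inr j, Sum.inl i => j ≤ i
  symm := by
    constructor
    rintro (i | i) (j | j) h
    · exact G.symm.symm _ _ h
    · exact h
    · exact h
    · exact H.symm.symm _ _ h
  loopless := by
    constructor
    rintro (i | i) h
    · exact G.loopless.irrefl i h
    · exact H.loopless.irrefl i h

/-! ### Flips by a set, by a pair of sets, and by a collection of sets -/

/-- The `X`-flip of `G`: complement the adjacency inside `X`. (The `∅`-flip is `G` itself.) -/
def setFlip {V : Type u} (G : SimpleGraph V) (X : Set V) : SimpleGraph V :=
  sdFlip G (fun x y => x ∈ X ∧ y ∈ X)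

/-- `G * (X, Y)`: complement the adjacency between `X` and `Y`. -/
def pairFlip {V : Type u} (G : SimpleGraph V) (X Y : Set V) : SimpleGraph V :=
  sdFlip G (fun x y => x ∈ X ∧ y ∈ Y)

open Classical in
/-- The member of the collection `P` containing `v`, if any, and `{v}` otherwise. -/
noncomputable def blockOf {V : Type u} (P : Set (Set V)) (v : V) : Set V :=
  if h : ∃ X ∈ P, v ∈ X then h.choose else {v}

/-- A subset `F ⊆ P²` is symmetric if `(X,X') ∈ F` implies `(X',X) ∈ F`. -/
def SymmRelSet {α : Type u} (F : Set (α × α)) : Prop :=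
  ∀ a b : α, (a, b) ∈ F → (b, a) ∈ F

/-- The `(P,F)`-flip `H ⊕ (P,F)` of `H`: distinct vertices `u,v` are adjacent iff
`H.Adj u v` XOR `(P(u), P(v)) ∈ F`. -/
noncomputable def collFlip {V : Type u} (H : SimpleGraph V) (P : Set (Set V))
    (F : Set (Set V × Set V)) : SimpleGraph V :=
  sdFlip H (fun x y => (blockOf P x, blockOf P y) ∈ F)

/-- `P` is a collection of pairwise disjoint non-empty subsets. -/
def IsDisjNonemptyColl {V : Type u} (P : Set (Set V)) : Prop :=
  (∀ X ∈ P, X.Nonempty) ∧ P.PairwiseDisjoint id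

/-- `Q` is a coarsening of `P`: a collection of disjoint non-empty sets,
each a union of members of `P`. -/
def IsCoarsening {α : Type u} (Q P : Set (Set α)) : Prop :=
  IsDisjNonemptyColl Q ∧ ∀ X ∈ Q, ∃ C ⊆ P, X = ⋃₀ C

/-! ### The graph `mPₙ` and flipped `mPₙ`'s -/

/-- `mPₙ`: the disjoint union of `m` copies of the path `Pₙ`, with vertex set `[m] × [n]`. -/
def pathsGraph (m n : ℕ) : SimpleGraph (Fin m × Fin n) where
  Adj x y := x.1 = y.1 ∧ (pathGraph n).Adj x.2 y.2
  symm := by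
    constructor
    rintro ⟨i, a⟩ ⟨j, b⟩ ⟨h1, h2⟩
    exact ⟨h1.symm, (pathGraph n).symm.symm _ _ h2⟩
  loopless := by
    constructor
    rintro ⟨i, a⟩ ⟨_, h⟩
    exact (pathGraph n).loopless.irrefl a h

/-- The `j`-th column of `mPₙ`. -/
def column (m n : ℕ) (j : Fin n) : Set (Fin m × Fin n) := {p | p.2 = j}

/-- The column set of `mPₙ`. -/
def columnSet (m n : ℕ) : Set (Set (Fin m × Fin n)) := Set.range (column m n)

/-- A flipped `mPₙ`: a `P`-flip of `mPₙ` where `P` is a coarsening of the column set. -/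
def IsFlippedPaths (m n : ℕ) (G : SimpleGraph (Fin m × Fin n)) : Prop :=
  ∃ (P : Set (Set (Fin m × Fin n))) (F : Set (Set (Fin m × Fin n) × Set (Fin m × Fin n))),
    IsCoarsening P (columnSet m n) ∧ F ⊆ P ×ˢ P ∧ SymmRelSet F ∧
    G = collFlip (pathsGraph m n) P F

/-- A `k`-flipped `mPₙ`: a flipped `mPₙ` with `|P| ≤ k`. -/
def IsKFlippedPaths (k m n : ℕ) (G : SimpleGraph (Fin m × Fin n)) : Prop :=
  ∃ (P : Set (Set (Fin m × Fin n))) (F : Set (Set (Fin m × Fin n) × Set (Fin m × Fin n))),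
    IsCoarsening P (columnSet m n) ∧ P.ncard ≤ k ∧ F ⊆ P ×ˢ P ∧ SymmRelSet F ∧
    G = collFlip (pathsGraph m n) P F

/-! ### Cut-rank and rank-depth -/

open Classical in
/-- The cut-rank `ρ_G(S)`: the rank over GF(2) of the `S × (V ∖ S)` submatrix of the
adjacency matrix of `G`. -/
noncomputable def cutRank {V : Type u} [Fintype V] (G : SimpleGraph V) (S : Set V) : ℕ :=
  Matrix.rank (Matrix.of fun (i : S) (j : (Sᶜ : Set V)) =>
    if G.Adj (i : V) (j : V) then (1 : ZMod 2) else 0)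

/-- The rank-depth of `G`: the least `k` such that `G` has a decomposition `(T, σ)` into a
tree `T` with the vertices of `G` identified with the leaves of `T` via `σ`, of width at
most `k` and radius at most `k`.  The width condition is expressed as: for every non-leaf
node `v` of `T` and every set `S ⊆ V(G)` that is a union of parts of the partition of `V(G)`
induced by the components of `T - v`, we have `ρ_G(S) ≤ k`. -/
noncomputable def rankDepth {V : Type u} [Fintype V] (G : SimpleGraph V) : ℕ :=
  sInf {k : ℕ |
    ∃ (N : ℕ) (T : SimpleGraph (Fin N))
      (σ : V ≃ {x : Fin N // (T.neighborSet x).ncard ≤ 1}),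
      T.IsTree ∧
      (∃ c : Fin N, ∀ x : Fin N, T.dist c x ≤ k) ∧
      (∀ x : Fin N, 1 < (T.neighborSet x).ncard →
        ∀ S : Set V,
          (∀ a b : V, a ∈ S →
            (∃ w : T.Walk ((σ a : {x : Fin N // (T.neighborSet x).ncard ≤ 1}) : Fin N)
                ((σ b : {x : Fin N // (T.neighborSet x).ncard ≤ 1}) : Fin N),
              x ∉ w.support) → b ∈ S) →
          cutRank G S ≤ k)}

/-! ### Restrictions of collections, and the sets `C_F`, `L_F`, `R_F`, `D_F` -/

/-- The restriction `P|_{S}` of a collection of subsets of `V` to a subset `S`. -/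
def restrictColl {V : Type u} (P : Set (Set V)) (S : Set V) : Set (Set S) :=
  {Y | ∃ X ∈ P, (Subtype.val ⁻¹' X : Set S).Nonempty ∧ Y = (Subtype.val ⁻¹' X : Set S)}

/-- The restriction `F|_{S}` of a collection of pairs of subsets of `V` to a subset `S`. -/
def restrictF {V : Type u} (F : Set (Set V × Set V)) (S : Set V) : Set (Set S × Set S) :=
  {q | ∃ p ∈ F, (Subtype.val ⁻¹' p.1 : Set S).Nonempty ∧ (Subtype.val ⁻¹' p.2 : Set S).Nonempty ∧
      q = ((Subtype.val ⁻¹' p.1 : Set S), (Subtype.val ⁻¹' p.2 : Set S))}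

/-- `C_F(X,X') = {Y ∈ P : (X,Y) ∈ F and (X',Y) ∈ F}`. -/
def CF {V : Type u} (P : Set (Set V)) (F : Set (Set V × Set V)) (X X' : Set V) : Set (Set V) :=
  {Y ∈ P | (X, Y) ∈ F ∧ (X', Y) ∈ F}

/-- `L_F(X,X') = {Y ∈ P : (X,Y) ∈ F and (X',Y) ∉ F}`. -/
def LF {V : Type u} (P : Set (Set V)) (F : Set (Set V × Set V)) (X X' : Set V) : Set (Set V) :=
  {Y ∈ P | (X, Y) ∈ F ∧ (X', Y) ∉ F}

/-- `R_F(X,X') = {Y ∈ P : (X,Y) ∉ F and (X',Y) ∈ F}`. -/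
def RF {V : Type u} (P : Set (Set V)) (F : Set (Set V × Set V)) (X X' : Set V) : Set (Set V) :=
  {Y ∈ P | (X, Y) ∉ F ∧ (X', Y) ∈ F}

/-- `D_F(X,X') = (C×L) ∪ (C×R) ∪ (L×R) ∪ (L×C) ∪ (R×C) ∪ (R×L)`. -/
def DF {V : Type u} (P : Set (Set V)) (F : Set (Set V × Set V)) (X X' : Set V) :
    Set (Set V × Set V) :=
  (CF P F X X' ×ˢ LF P F X X') ∪ (CF P F X X' ×ˢ RF P F X X') ∪ (LF P F X X' ×ˢ RF P F X X') ∪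
  (LF P F X X' ×ˢ CF P F X X') ∪ (RF P F X X' ×ˢ CF P F X X') ∪ (RF P F X X' ×ˢ LF P F X X')

/-- The set of `t` consecutive vertices of the path `P_s` starting at position `i` (0-indexed). -/
def consec (s i t : ℕ) : Set (Fin s) := {x | i ≤ (x : ℕ) ∧ (x : ℕ) < i + t}

/-- An `(s,t)`-path: a graph isomorphic to the `X`-flip of `P_s` for a set `X` of `t`
consecutive vertices of `P_s`. -/
def IsSTPath (s t : ℕ) {W : Type v} (G : SimpleGraph W) : Prop :=
  ∃ i : ℕ, i + t ≤ s ∧ Nonempty (G ≃g setFlip (pathGraph s) (consec s i t))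

/-- toggle predicate for pivoting -/
def Ttog (a b c d : Prop) : Prop :=
  (a ∧ b ∧ Xor' c d) ∨ (Xor' a b ∧ c ∧ d) ∨ (a ∧ ¬b ∧ ¬c ∧ d) ∨ (¬a ∧ b ∧ c ∧ ¬d)

lemma localComp_adj {V : Type u} (G : SimpleGraph V) (w x y : V) :
    (localComp G w).Adj x y ↔
      x ≠ y ∧ Xor' (G.Adj x y) ((G.Adj w x ∧ G.Adj w y) ∨ (G.Adj w y ∧ G.Adj w x)) :=
  Iff.rfl

set_option maxHeartbeats 1000000 in
lemma pivot_adj {V : Type u} (G : SimpleGraph V) (u v x y : V) (huv : G.Adj u v)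
    (hxu : x ≠ u) (hxv : x ≠ v) (hyu : y ≠ u) (hyv : y ≠ v) :
    (pivot G u v).Adj x y ↔
      x ≠ y ∧ Xor' (G.Adj x y) (Ttog (G.Adj u x) (G.Adj v x) (G.Adj u y) (G.Adj v y)) := by
  have huv' : G.Adj v u := huv.symm
  have hne : u ≠ v := huv.ne
  have hne' : v ≠ u := hne.symm
  have hux : ¬ u = x := fun h => hxu h.symm
  have hvx : ¬ v = x := fun h => hxv h.symm
  have huy : ¬ u = y := fun h => hyu h.symm
  have hvy : ¬ v = y := fun h => hyv h.symm
  have hu : ¬ G.Adj u u := G.loopless.irrefl u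
  have hv : ¬ G.Adj v v := G.loopless.irrefl v
  simp only [pivot, localComp_adj, Ttog, G.adj_comm x u, G.adj_comm x v, G.adj_comm y u,
    G.adj_comm y v, G.adj_comm v u]
  by_cases e : G.Adj x y <;> by_cases a : G.Adj u x <;> by_cases b : G.Adj v x <;>
    by_cases c : G.Adj u y <;> by_cases d : G.Adj v y <;>
    by_cases hxy : x = y <;>
    simp_all [Xor']

lemma Ttog_comm {a b c d : Prop} : Ttog a b c d ↔ Ttog c d a b := by
  unfold Ttog Xor'; tauto

lemma mem_blockOf {V : Type u} (P : Set (Set V)) (x : V) : x ∈ blockOf P x := by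
  unfold blockOf
  by_cases h : ∃ X ∈ P, x ∈ X
  · rw [dif_pos h]; exact h.choose_spec.2
  · rw [dif_neg h]; exact rfl

lemma blockOf_eq_of_mem {V : Type u} {P : Set (Set V)} (hP : P.PairwiseDisjoint id)
    {B : Set V} {x : V} (hB : B ∈ P) (hx : x ∈ B) : blockOf P x = B := by
  unfold blockOf
  have h : ∃ X ∈ P, x ∈ X := ⟨B, hB, hx⟩
  rw [dif_pos h]
  obtain ⟨h1, h2⟩ := h.choose_spec
  by_contra hne
  exact Set.disjoint_left.mp (hP h1 hB hne) h2 hx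

lemma collFlip_adj {V : Type u} (H : SimpleGraph V) (P : Set (Set V))
    (F : Set (Set V × Set V)) (hs : SymmRelSet F) (x y : V) :
    (collFlip H P F).Adj x y ↔
      x ≠ y ∧ Xor' (H.Adj x y) ((blockOf P x, blockOf P y) ∈ F) := by
  have h1 : ((blockOf P x, blockOf P y) ∈ F ∨ (blockOf P y, blockOf P x) ∈ F) ↔
      (blockOf P x, blockOf P y) ∈ F := ⟨fun h => h.elim id (hs _ _), Or.inl⟩
  change x ≠ y ∧ Xor' (H.Adj x y) _ ↔ _
  rw [h1]

/-- embedding of `Fin m × Fin n` into `Fin (m+2) × Fin n` -/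
def emb (m n : ℕ) (x : Fin m × Fin n) : Fin (m + 2) × Fin n :=
  (Fin.castLE (Nat.le_add_right m 2) x.1, x.2)

lemma emb_inj (m n : ℕ) : Function.Injective (emb m n) := by
  rintro ⟨a, b⟩ ⟨c, d⟩ h
  simp only [emb, Prod.mk.injEq, Fin.castLE_inj] at h
  exact Prod.ext h.1 h.2

lemma paths_adj_emb (m n : ℕ) (x y : Fin m × Fin n) :
    (pathsGraph (m + 2) n).Adj (emb m n x) (emb m n y) ↔ (pathsGraph m n).Adj x y := by
  simp only [pathsGraph, emb, Fin.castLE_inj]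

lemma emb_col (m n : ℕ) (j : Fin n) :
    emb m n ⁻¹' (column (m + 2) n j) = column m n j := rfl

section AbstractSteps
variable {p q t r a b c d cxx cxp : Prop}

lemma stepA (h1 : ¬cxx) (h2 : cxp) (h3 : q ↔ a) : ¬ Xor' q (Ttog a b cxx cxp) := by
  unfold Ttog Xor' Xor; tauto

lemma stepX (h1 : ¬cxx) (h2 : cxp) : ¬ Xor' c (Ttog cxx cxp c d) := by
  unfold Ttog Xor' Xor; tauto

lemma stepBadL (h1 : ¬q) (h2 : ¬a) (h3 : ¬b) : ¬ Xor' q (Ttog a b c d) := by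
  unfold Ttog Xor' Xor; tauto

lemma stepBadR (h1 : ¬q) (h2 : ¬c) (h3 : ¬d) : ¬ Xor' q (Ttog a b c d) := by
  unfold Ttog Xor' Xor; tauto

lemma xorStep (h : Xor' q t ↔ r) : Xor' (Xor' p q) t ↔ Xor' p r := by
  unfold Xor' Xor at *; tauto

lemma andXorStep (ha : a) (hp : ¬p) : (a ∧ Xor' p q) ↔ q := by
  unfold Xor' Xor; tauto

end AbstractSteps

lemma key {m n : ℕ} (hm : 1 ≤ m) {k : ℕ} (hk : 2 ≤ k)
    (P : Set (Set (Fin (m + 2) × Fin n))) (hP : IsCoarsening P (columnSet (m + 2) n))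
    (hPk : P.ncard = k)
    (X : Set (Fin (m + 2) × Fin n)) (hX : X ∈ P)
    (Rel : Set (Fin (m + 2) × Fin n) → Set (Fin (m + 2) × Fin n) → Prop)
    (hRelsymm : ∀ A B, Rel A B → Rel B A)
    (hReldom : ∀ A B, Rel A B → (A ∈ P ∧ A ≠ X) ∧ (B ∈ P ∧ B ≠ X))
    (H : SimpleGraph (Fin (m + 2) × Fin n))
    (hH : ∀ x y : Fin m × Fin n, H.Adj (emb m n x) (emb m n y) ↔
        x ≠ y ∧ Xor' ((pathsGraph m n).Adj x y)
          (Rel (blockOf P (emb m n x)) (blockOf P (emb m n y)))) :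
    ∃ G' : SimpleGraph (Fin m × Fin n), IsKFlippedPaths (k - 1) m n G' ∧
      Nonempty (G' ≃g H.induce (Set.range (emb m n))) := by
  classical
  have hPd : P.PairwiseDisjoint id := hP.1.2
  set g : Set (Fin (m + 2) × Fin n) → Set (Fin m × Fin n) := fun B => emb m n ⁻¹' B with hg
  set P'' : Set (Set (Fin m × Fin n)) := g '' (P \ {X}) with hP''
  set F'' : Set (Set (Fin m × Fin n) × Set (Fin m × Fin n)) :=
    {q | ∃ B1, (B1 ∈ P ∧ B1 ≠ X) ∧ ∃ B2, (B2 ∈ P ∧ B2 ≠ X) ∧ Rel B1 B2 ∧ q = (g B1, g B2)}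
    with hF''
  -- each block maps to a union of columns
  have hgU : ∀ B ∈ P, ∃ C ⊆ columnSet m n, g B = ⋃₀ C := by
    intro B hB
    obtain ⟨C, hC, rfl⟩ := hP.2 B hB
    refine ⟨(fun c => emb m n ⁻¹' c) '' C, ?_, ?_⟩
    · rintro c' ⟨c, hc, rfl⟩
      obtain ⟨j, rfl⟩ := hC hc
      exact ⟨j, (emb_col m n j).symm⟩
    · rw [hg]
      simp only [Set.preimage_sUnion, Set.sUnion_image]
  have hgne : ∀ B ∈ P, (g B).Nonempty := by
    intro B hB
    obtain ⟨C, hC, hBC⟩ := hP.2 B hB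
    obtain ⟨p, hp⟩ := hP.1.1 B hB
    rw [hBC] at hp
    obtain ⟨c, hcC, hpc⟩ := hp
    obtain ⟨j, rfl⟩ := hC hcC
    refine ⟨(⟨0, hm⟩, j), ?_⟩
    have : emb m n (⟨0, hm⟩, j) ∈ column (m + 2) n j := rfl
    rw [hg]
    simp only [Set.mem_preimage, hBC]
    exact ⟨column (m + 2) n j, hcC, this⟩
  have hgdisj : ∀ B1 ∈ P, ∀ B2 ∈ P, B1 ≠ B2 → Disjoint (g B1) (g B2) := by
    intro B1 h1 B2 h2 hne
    exact (hPd h1 h2 hne).preimage _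
  have hP''disj : P''.PairwiseDisjoint id := by
    rintro Y1 ⟨B1, hB1, rfl⟩ Y2 ⟨B2, hB2, rfl⟩ hne
    have hB12 : B1 ≠ B2 := fun h => hne (by rw [h])
    exact hgdisj B1 hB1.1 B2 hB2.1 hB12
  -- blockOf computations
  have hblock'' : ∀ (x : Fin m × Fin n) (B : Set (Fin (m + 2) × Fin n)),
      B ∈ P → B ≠ X → emb m n x ∈ B → blockOf P'' x = g B := by
    intro x B hB hBX hxB
    exact blockOf_eq_of_mem hP''disj ⟨B, ⟨hB, hBX⟩, rfl⟩ hxB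
  -- the central equivalence
  have hcore : ∀ x y : Fin m × Fin n,
      Rel (blockOf P (emb m n x)) (blockOf P (emb m n y)) ↔
        (blockOf P'' x, blockOf P'' y) ∈ F'' := by
    intro x y
    by_cases hx : ∃ B, B ∈ P ∧ B ≠ X ∧ emb m n x ∈ B
    · obtain ⟨B1, hB1P, hB1X, hxB1⟩ := hx
      by_cases hy : ∃ B, B ∈ P ∧ B ≠ X ∧ emb m n y ∈ B
      · obtain ⟨B2, hB2P, hB2X, hyB2⟩ := hy
        rw [blockOf_eq_of_mem hPd hB1P hxB1, blockOf_eq_of_mem hPd hB2P hyB2,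
          hblock'' x B1 hB1P hB1X hxB1, hblock'' y B2 hB2P hB2X hyB2]
        constructor
        · intro hr
          exact ⟨B1, ⟨hB1P, hB1X⟩, B2, ⟨hB2P, hB2X⟩, hr, rfl⟩
        · rintro ⟨B1', ⟨hB1'P, hB1'X⟩, B2', ⟨hB2'P, hB2'X⟩, hr, heq⟩
          rw [Prod.mk.injEq] at heq
          have hx1 : (x : Fin m × Fin n) ∈ g B1' := heq.1 ▸ hxB1
          have hy2 : (y : Fin m × Fin n) ∈ g B2' := heq.2 ▸ hyB2
          have e1 : B1' = B1 := by
            by_contra hne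
            exact Set.disjoint_left.mp (hPd hB1'P hB1P hne) hx1 hxB1
          have e2 : B2' = B2 := by
            by_contra hne
            exact Set.disjoint_left.mp (hPd hB2'P hB2P hne) hy2 hyB2
          rw [e1, e2] at hr
          exact hr
      · refine iff_of_false ?_ ?_
        · intro hr
          obtain ⟨hbP, hbX⟩ := (hReldom _ _ hr).2
          exact hy ⟨blockOf P (emb m n y), hbP, hbX, mem_blockOf P (emb m n y)⟩
        · rintro ⟨B1', hB1', B2', ⟨hB2'P, hB2'X⟩, hr, heq⟩
          rw [Prod.mk.injEq] at heq
          have : (y : Fin m × Fin n) ∈ g B2' := heq.2 ▸ mem_blockOf P'' y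
          exact hy ⟨B2', hB2'P, hB2'X, this⟩
    · refine iff_of_false ?_ ?_
      · intro hr
        obtain ⟨hbP, hbX⟩ := (hReldom _ _ hr).1
        exact hx ⟨blockOf P (emb m n x), hbP, hbX, mem_blockOf P (emb m n x)⟩
      · rintro ⟨B1', ⟨hB1'P, hB1'X⟩, B2', hB2', hr, heq⟩
        rw [Prod.mk.injEq] at heq
        have : (x : Fin m × Fin n) ∈ g B1' := heq.1 ▸ mem_blockOf P'' x
        exact hx ⟨B1', hB1'P, hB1'X, this⟩
  have hF''symm : SymmRelSet F'' := by
    rintro a b ⟨B1, h1, B2, h2, hr, heq⟩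
    rw [Prod.mk.injEq] at heq
    exact ⟨B2, h2, B1, h1, hRelsymm _ _ hr, by rw [Prod.mk.injEq]; exact ⟨heq.2, heq.1⟩⟩
  refine ⟨collFlip (pathsGraph m n) P'' F'', ⟨P'', F'', ?_, ?_, ?_, hF''symm, rfl⟩, ?_⟩
  · -- coarsening
    refine ⟨⟨?_, hP''disj⟩, ?_⟩
    · rintro Y ⟨B, hB, rfl⟩
      exact hgne B hB.1
    · rintro Y ⟨B, hB, rfl⟩
      exact hgU B hB.1
  · -- cardinality
    calc P''.ncard ≤ (P \ {X}).ncard := Set.ncard_image_le (Set.toFinite _)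
    _ = k - 1 := by rw [Set.ncard_diff_singleton_of_mem hX, hPk]
  · -- F'' ⊆ P'' ×ˢ P''
    rintro q ⟨B1, h1, B2, h2, hr, rfl⟩
    exact ⟨⟨B1, ⟨h1.1, h1.2⟩, rfl⟩, ⟨B2, ⟨h2.1, h2.2⟩, rfl⟩⟩
  · -- the isomorphism
    refine ⟨⟨Equiv.ofInjective (emb m n) (emb_inj m n), ?_⟩⟩
    intro x y
    have h1 : (H.induce (Set.range (emb m n))).Adj (Equiv.ofInjective (emb m n) (emb_inj m n) x)
        (Equiv.ofInjective (emb m n) (emb_inj m n) y) ↔ H.Adj (emb m n x) (emb m n y) := Iff.rfl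
    rw [h1, hH x y, collFlip_adj _ _ _ hF''symm, hcore x y]

/-! ## Statement 10 -/
theorem stmt10 (m n : ℕ) (hm : 1 ≤ m) (hn : 1 ≤ n) (k : ℕ) (hk : 2 ≤ k)
    (P : Set (Set (Fin (m + 2) × Fin n))) (hP : IsCoarsening P (columnSet (m + 2) n))
    (hPk : P.ncard = k)
    (F : Set (Set (Fin (m + 2) × Fin n) × Set (Fin (m + 2) × Fin n)))
    (hFP : F ⊆ P ×ˢ P) (hFsymm : SymmRelSet F)
    (X : Set (Fin (m + 2) × Fin n)) (hX : X ∈ P) (hXX : (X, X) ∉ F) :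
    ∃ G' : SimpleGraph (Fin m × Fin n), IsKFlippedPaths (k - 1) m n G' ∧
      IsPivotMinorOf G' (collFlip (pathsGraph (m + 2) n) P F) := by
  classical
  have hPd : P.PairwiseDisjoint id := hP.1.2
  set G := collFlip (pathsGraph (m + 2) n) P F with hGdef
  -- every block contains full columns
  have hfullcol : ∀ B ∈ P, ∃ j : Fin n, ∀ r : Fin (m + 2), (r, j) ∈ B := by
    intro B hB
    obtain ⟨C, hC, hBC⟩ := hP.2 B hB
    obtain ⟨p, hp⟩ := hP.1.1 B hB
    rw [hBC] at hp
    obtain ⟨c, hcC, hpc⟩ := hp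
    obtain ⟨j, rfl⟩ := hC hcC
    exact ⟨j, fun r => hBC ▸ ⟨column (m + 2) n j, hcC, rfl⟩⟩
  by_cases hiso : ∀ B, (X, B) ∉ F
  · -- Case A : X is isolated in F; no pivoting needed
    set RelA : Set (Fin (m + 2) × Fin n) → Set (Fin (m + 2) × Fin n) → Prop :=
      fun B1 B2 => (B1, B2) ∈ F ∧ B1 ≠ X ∧ B2 ≠ X with hRelA
    have hRelsymm : ∀ A B, RelA A B → RelA B A :=
      fun A B h => ⟨hFsymm _ _ h.1, h.2.2, h.2.1⟩
    have hReldom : ∀ A B, RelA A B → (A ∈ P ∧ A ≠ X) ∧ (B ∈ P ∧ B ≠ X) := by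
      intro A B h
      have := hFP h.1
      rw [Set.mem_prod] at this
      exact ⟨⟨this.1, h.2.1⟩, ⟨this.2, h.2.2⟩⟩
    have hH : ∀ x y : Fin m × Fin n, G.Adj (emb m n x) (emb m n y) ↔
        x ≠ y ∧ Xor' ((pathsGraph m n).Adj x y)
          (RelA (blockOf P (emb m n x)) (blockOf P (emb m n y))) := by
      intro x y
      rw [hGdef, collFlip_adj _ _ _ hFsymm, paths_adj_emb, (emb_inj m n).ne_iff]
      have hmem : (blockOf P (emb m n x), blockOf P (emb m n y)) ∈ F ↔
          RelA (blockOf P (emb m n x)) (blockOf P (emb m n y)) := by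
        constructor
        · intro h
          exact ⟨h, fun e => hiso _ (e ▸ h), fun e => hiso _ (hFsymm _ _ (by rwa [e] at h))⟩
        · exact And.left
      rw [hmem]
    obtain ⟨G', hflip, ⟨iso⟩⟩ := key hm hk P hP hPk X hX RelA hRelsymm hReldom G hH
    exact ⟨G', hflip, [], Set.range (emb m n), trivial, ⟨iso⟩⟩
  · -- Case B : pivot an edge between X and some X'
    push_neg at hiso
    obtain ⟨X', hXX'⟩ := hiso
    have hX'mem := hFP hXX'
    rw [Set.mem_prod] at hX'mem
    have hX'P : X' ∈ P := hX'mem.2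
    have hX'X : X' ≠ X := fun h => hXX (h ▸ hXX')
    have hX'XF : (X', X) ∈ F := hFsymm _ _ hXX'
    obtain ⟨j0, hj0⟩ := hfullcol X hX
    obtain ⟨j1, hj1⟩ := hfullcol X' hX'P
    set u : Fin (m + 2) × Fin n := (⟨m, by omega⟩, j0) with hu
    set v : Fin (m + 2) × Fin n := (⟨m + 1, by omega⟩, j1) with hv
    have huX : u ∈ X := hj0 _
    have hvX' : v ∈ X' := hj1 _
    have hbu : blockOf P u = X := blockOf_eq_of_mem hPd hX huX
    have hbv : blockOf P v = X' := blockOf_eq_of_mem hPd hX'P hvX'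
    have hune : ∀ x : Fin m × Fin n, emb m n x ≠ u := by
      intro x h
      have := congrArg (fun p => (p.1 : ℕ)) h
      simp only [emb, hu, Fin.coe_castLE] at this
      omega
    have hvne : ∀ x : Fin m × Fin n, emb m n x ≠ v := by
      intro x h
      have := congrArg (fun p => (p.1 : ℕ)) h
      simp only [emb, hv, Fin.coe_castLE] at this
      omega
    have hpau : ∀ x : Fin m × Fin n, ¬ (pathsGraph (m + 2) n).Adj u (emb m n x) := by
      intro x h
      have := congrArg (Fin.val) h.1
      simp only [emb, hu, Fin.coe_castLE] at this
      omega
    have hpav : ∀ x : Fin m × Fin n, ¬ (pathsGraph (m + 2) n).Adj v (emb m n x) := by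
      intro x h
      have := congrArg (Fin.val) h.1
      simp only [emb, hv, Fin.coe_castLE] at this
      omega
    have hpauv : ¬ (pathsGraph (m + 2) n).Adj u v := by
      intro h
      have := congrArg (Fin.val) h.1
      simp only [hu, hv] at this
      omega
    have huvne : u ≠ v := by
      intro h
      have := congrArg (fun p => (p.1 : ℕ)) h
      simp only [hu, hv] at this
      omega
    have hGuv : G.Adj u v := by
      rw [hGdef, collFlip_adj _ _ _ hFsymm, hbu, hbv]
      exact ⟨huvne, Or.inr ⟨hXX', hpauv⟩⟩
    -- the new relation after pivoting
    set RelB : Set (Fin (m + 2) × Fin n) → Set (Fin (m + 2) × Fin n) → Prop :=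
      fun B1 B2 => B1 ∈ P ∧ B2 ∈ P ∧ B1 ≠ X ∧ B2 ≠ X ∧
        Xor' ((B1, B2) ∈ F)
          (Ttog ((X, B1) ∈ F) ((X', B1) ∈ F) ((X, B2) ∈ F) ((X', B2) ∈ F)) with hRelB
    have hRelsymm : ∀ A B, RelB A B → RelB B A := by
      rintro A B ⟨h1, h2, h3, h4, h5⟩
      refine ⟨h2, h1, h4, h3, ?_⟩
      rw [show ((B, A) ∈ F) = ((A, B) ∈ F) from propext ⟨hFsymm _ _, hFsymm _ _⟩, Ttog_comm]
      exact h5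
    have hReldom : ∀ A B, RelB A B → (A ∈ P ∧ A ≠ X) ∧ (B ∈ P ∧ B ≠ X) :=
      fun A B h => ⟨⟨h.1, h.2.2.1⟩, ⟨h.2.1, h.2.2.2.1⟩⟩
    -- vertex status trichotomy
    have hstat : ∀ z : Fin m × Fin n,
        (blockOf P (emb m n z) ∈ P ∧ blockOf P (emb m n z) ≠ X) ∨
        blockOf P (emb m n z) = X ∨
        (blockOf P (emb m n z) ∉ P ∧
          ∀ A, (A, blockOf P (emb m n z)) ∉ F ∧ (blockOf P (emb m n z), A) ∉ F) := by
      intro z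
      by_cases h1 : blockOf P (emb m n z) ∈ P
      · by_cases h2 : blockOf P (emb m n z) = X
        · exact Or.inr (Or.inl h2)
        · exact Or.inl ⟨h1, h2⟩
      · refine Or.inr (Or.inr ⟨h1, fun A => ⟨fun h => ?_, fun h => ?_⟩⟩)
        · have := hFP h; rw [Set.mem_prod] at this; exact h1 this.2
        · have := hFP h; rw [Set.mem_prod] at this; exact h1 this.1
    -- the key step equivalence
    have hstep : ∀ x y : Fin m × Fin n,
        Xor' ((blockOf P (emb m n x), blockOf P (emb m n y)) ∈ F)
          (Ttog ((X, blockOf P (emb m n x)) ∈ F) ((X', blockOf P (emb m n x)) ∈ F)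
            ((X, blockOf P (emb m n y)) ∈ F) ((X', blockOf P (emb m n y)) ∈ F)) ↔
          RelB (blockOf P (emb m n x)) (blockOf P (emb m n y)) := by
      intro x y
      rcases hstat x with hx | hx | hx
      · rcases hstat y with hy | hy | hy
        · exact ⟨fun h => ⟨hx.1, hy.1, hx.2, hy.2, h⟩, fun h => h.2.2.2.2⟩
        · rw [hy]
          refine iff_of_false ?_ (fun h => h.2.2.2.1 rfl)
          exact stepA hXX hX'XF ⟨hFsymm _ _, hFsymm _ _⟩
        · refine iff_of_false ?_ (fun h => hy.1 h.2.1)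
          exact stepBadR (hy.2 (blockOf P (emb m n x))).1 (hy.2 X).1 (hy.2 X').1
      · rw [hx]
        refine iff_of_false ?_ (fun h => h.2.2.1 rfl)
        exact stepX hXX hX'XF
      · refine iff_of_false ?_ (fun h => hx.1 h.1)
        exact stepBadL (hx.2 (blockOf P (emb m n y))).2 (hx.2 X).1 (hx.2 X').1
    -- adjacency of u, v to embedded vertices
    have hux : ∀ z : Fin m × Fin n,
        (G.Adj u (emb m n z) ↔ (X, blockOf P (emb m n z)) ∈ F) := by
      intro z
      rw [hGdef, collFlip_adj _ _ _ hFsymm, hbu]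
      exact andXorStep (fun h => hune z h.symm) (hpau z)
    have hvx : ∀ z : Fin m × Fin n,
        (G.Adj v (emb m n z) ↔ (X', blockOf P (emb m n z)) ∈ F) := by
      intro z
      rw [hGdef, collFlip_adj _ _ _ hFsymm, hbv]
      exact andXorStep (fun h => hvne z h.symm) (hpav z)
    have hH : ∀ x y : Fin m × Fin n, (pivot G u v).Adj (emb m n x) (emb m n y) ↔
        x ≠ y ∧ Xor' ((pathsGraph m n).Adj x y)
          (RelB (blockOf P (emb m n x)) (blockOf P (emb m n y))) := by
      intro x y
      rw [pivot_adj G u v _ _ hGuv (hune x) (hvne x) (hune y) (hvne y)]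
      rw [hux x, hvx x, hux y, hvx y, (emb_inj m n).ne_iff]
      have hxy : G.Adj (emb m n x) (emb m n y) ↔ x ≠ y ∧
          Xor' ((pathsGraph m n).Adj x y)
            ((blockOf P (emb m n x), blockOf P (emb m n y)) ∈ F) := by
        rw [hGdef, collFlip_adj _ _ _ hFsymm, paths_adj_emb, (emb_inj m n).ne_iff]
      rw [hxy]
      constructor
      · rintro ⟨hxy, hXor⟩
        rw [and_iff_right hxy] at hXor
        exact ⟨hxy, (xorStep (hstep x y)).mp hXor⟩
      · rintro ⟨hxy, hXor⟩
        refine ⟨hxy, ?_⟩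
        rw [and_iff_right hxy]
        exact (xorStep (hstep x y)).mpr hXor
    obtain ⟨G', hflip, ⟨iso⟩⟩ := key hm hk P hP hPk X hX RelB hRelsymm hReldom (pivot G u v) hH
    exact ⟨G', hflip, [(u, v)], Set.range (emb m n), ⟨hGuv, trivial⟩, ⟨iso⟩⟩
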